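/- The map from ℝP¹ × ℝP¹ to the projectivization P(M₂(ℝ)) sending a pair of lines ([u],[v]) (u, v nonzero vectors in ℝ²) to the class [u vᵀ] of the rank-one matrix u vᵀ is well defined and is a homeomorphism onto the set {[A] ∈ P(M₂(ℝ)) : det A = 0}. In particular the boundary at infinity of AdS₃, i.e. the projectivized null cone of the form -det, is homeomorphic to ℝP¹ × ℝP¹. -/

import Mathlib

noncomputable section

/-- The projectivization of a real topological vector space `V`: the quotient of the space of
nonzero vectors by the rescaling relation, with the quotient topology. -/
def Proj (V : Type*) [AddCommGroup V] [Module ℝ V] [TopologicalSpace V] :=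
  Quot (fun v w : {v : V // v ≠ 0} => ∃ c : ℝ, c ≠ 0 ∧ c • v.val = w.val)

instance (V : Type*) [AddCommGroup V] [Module ℝ V] [TopologicalSpace V] :
    TopologicalSpace (Proj V) :=
  inferInstanceAs (TopologicalSpace (Quot _))

namespace AdSProof

variable {V : Type*} [AddCommGroup V] [Module ℝ V] [TopologicalSpace V]

abbrev rel (V : Type*) [AddCommGroup V] [Module ℝ V] [TopologicalSpace V]
    (v w : {v : V // v ≠ 0}) : Prop := ∃ c : ℝ, c ≠ 0 ∧ c • v.val = w.val

theorem rel_equivalence : Equivalence (rel V) := by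
  constructor
  · exact fun v => ⟨1, one_ne_zero, one_smul _ _⟩
  · rintro v w ⟨c, hc, hcv⟩
    exact ⟨c⁻¹, inv_ne_zero hc, by rw [← hcv, inv_smul_smul₀ hc]⟩
  · rintro u v w ⟨c, hc, hcv⟩ ⟨d, hd, hdv⟩
    exact ⟨d * c, mul_ne_zero hd hc, by rw [mul_smul, hcv, hdv]⟩

theorem quot_mk_eq_iff (v w : {v : V // v ≠ 0}) :
    (Quot.mk (rel V) v = Quot.mk (rel V) w) ↔ rel V v w := by
  rw [Quot.eq]
  exact Equivalence.eqvGen_iff rel_equivalence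

theorem mk_continuous : Continuous (Quot.mk (rel V) : {v : V // v ≠ 0} → Proj V) :=
  continuous_quot_mk

theorem smul_ne_zero' {c : ℝ} (hc : c ≠ 0) {v : V} (hv : v ≠ 0) : c • v ≠ 0 := by
  intro h
  apply hv
  rw [← inv_smul_smul₀ hc v, h, smul_zero]

def smulHomeo [ContinuousSMul ℝ V] (c : ℝˣ) : {v : V // v ≠ 0} ≃ₜ {v : V // v ≠ 0} where
  toFun v := ⟨(c : ℝ) • v.val, smul_ne_zero' c.ne_zero v.prop⟩
  invFun v := ⟨((c⁻¹ : ℝˣ) : ℝ) • v.val, smul_ne_zero' c⁻¹.ne_zero v.prop⟩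
  left_inv v := by ext; simp
  right_inv v := by ext; simp
  continuous_toFun := (continuous_subtype_val.const_smul _).subtype_mk _
  continuous_invFun := (continuous_subtype_val.const_smul _).subtype_mk _

theorem mk_isOpenMap [ContinuousSMul ℝ V] :
    IsOpenMap (Quot.mk (rel V) : {v : V // v ≠ 0} → Proj V) := by
  intro U hU
  rw [isOpen_coinduced]
  have : Quot.mk (rel V) ⁻¹' (Quot.mk (rel V) '' U) = ⋃ c : ℝˣ, (smulHomeo c) '' U := by
    ext w
    simp only [Set.mem_preimage, Set.mem_image, Set.mem_iUnion]
    constructor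
    · rintro ⟨u, hu, huw⟩
      obtain ⟨c, hc, hcv⟩ := (quot_mk_eq_iff u w).1 huw
      exact ⟨Units.mk0 c hc, u, hu, Subtype.ext hcv⟩
    · rintro ⟨c, u, hu, hcw⟩
      exact ⟨u, hu, (quot_mk_eq_iff u w).2 ⟨c, c.ne_zero, congrArg Subtype.val hcw⟩⟩
  rw [this]
  exact isOpen_iUnion fun c => (smulHomeo c).isOpenMap _ hU

theorem mk_openQuotientMap [ContinuousSMul ℝ V] :
    IsOpenQuotientMap (Quot.mk (rel V) : {v : V // v ≠ 0} → Proj V) :=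
  ⟨Quot.mk_surjective, mk_continuous, mk_isOpenMap⟩

theorem proj_t2 [ContinuousSMul ℝ V] (S : Set (V →L[ℝ] ℝ))
    (hsep : ∀ v : V, (∀ φ ∈ S, φ v = 0) → v = 0) : T2Space (Proj V) := by
  have hrel : ∀ v w : {v : V // v ≠ 0}, rel V v w ↔
      ∀ φ ∈ S, ∀ ψ ∈ S, φ v.val * ψ w.val = ψ v.val * φ w.val := by
    intro v w
    constructor
    · rintro ⟨c, hc, hcv⟩ φ hφ ψ hψ
      rw [← hcv]; simp only [map_smul, smul_eq_mul]; ring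
    · intro h
      have hv : ∃ φ ∈ S, φ v.val ≠ 0 := by
        by_contra hcon
        push_neg at hcon
        exact v.prop (hsep _ hcon)
      obtain ⟨φ, hφ, hφv⟩ := hv
      have heq : (φ w.val / φ v.val) • v.val - w.val = 0 := by
        apply hsep
        intro ψ hψ
        have h2 := h φ hφ ψ hψ
        simp only [map_sub, map_smul, smul_eq_mul]
        field_simp
        linarith
      have heq' : (φ w.val / φ v.val) • v.val = w.val := sub_eq_zero.1 heq
      refine ⟨_, fun hc => w.prop ?_, heq'⟩
      rw [← heq', hc, zero_smul]
  constructor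
  intro x y hxy
  induction x using Quot.ind with | _ v =>
  induction y using Quot.ind with | _ w =>
  have hnr : ¬ rel V v w := fun h => hxy (Quot.sound h)
  set C : Set ({v : V // v ≠ 0} × {v : V // v ≠ 0}) :=
    {p | ∀ φ ∈ S, ∀ ψ ∈ S, φ p.1.val * ψ p.2.val = ψ p.1.val * φ p.2.val} with hC
  have hCclosed : IsClosed C := by
    have : C = ⋂ φ ∈ S, ⋂ ψ ∈ S,
        {p : {v : V // v ≠ 0} × {v : V // v ≠ 0} |
          φ p.1.val * ψ p.2.val = ψ p.1.val * φ p.2.val} := by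
      ext p; simp [hC]
    rw [this]
    refine isClosed_biInter fun φ _ => isClosed_biInter fun ψ _ => isClosed_eq ?_ ?_
    · exact ((φ.continuous.comp (continuous_subtype_val.comp continuous_fst)).mul
        (ψ.continuous.comp (continuous_subtype_val.comp continuous_snd)))
    · exact ((ψ.continuous.comp (continuous_subtype_val.comp continuous_fst)).mul
        (φ.continuous.comp (continuous_subtype_val.comp continuous_snd)))
  have hvw : (v, w) ∈ Cᶜ := fun h => hnr ((hrel v w).2 h)
  obtain ⟨U₁, U₂, hU₁, hU₂, hvU, hwU, hsub⟩ :=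
    isOpen_prod_iff.1 hCclosed.isOpen_compl v w hvw
  refine ⟨Quot.mk _ '' U₁, Quot.mk _ '' U₂, mk_isOpenMap _ hU₁, mk_isOpenMap _ hU₂,
    ⟨v, hvU, rfl⟩, ⟨w, hwU, rfl⟩, ?_⟩
  rw [Set.disjoint_left]
  rintro p ⟨a, ha, rfl⟩ ⟨b, hb, hab⟩
  have : rel V a b := (quot_mk_eq_iff a b).1 hab.symm
  exact hsub (Set.mk_mem_prod ha hb) ((hrel a b).1 this)

section Concrete

theorem t2_projV0 : T2Space (Proj (Fin 2 → ℝ)) := by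
  apply proj_t2 (Set.range fun i : Fin 2 =>
    ContinuousLinearMap.proj (R := ℝ) (φ := fun _ : Fin 2 => ℝ) i)
  rintro v h
  funext i
  exact h _ ⟨i, rfl⟩

def entryCLM (i j : Fin 2) : Matrix (Fin 2) (Fin 2) ℝ →L[ℝ] ℝ :=
  { Matrix.entryLinearMap ℝ ℝ i j with
    cont := (continuous_apply j).comp (continuous_apply i) }

theorem t2_projM : T2Space (Proj (Matrix (Fin 2) (Fin 2) ℝ)) := by
  apply proj_t2 (Set.range fun p : Fin 2 × Fin 2 => entryCLM p.1 p.2)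
  rintro A h
  ext i j
  exact h _ ⟨(i, j), rfl⟩

theorem compact_projV0 : CompactSpace (Proj (Fin 2 → ℝ)) := by
  haveI : CompactSpace (Metric.sphere (0 : Fin 2 → ℝ) 1) :=
    isCompact_iff_compactSpace.1 (isCompact_sphere 0 1)
  set g : Metric.sphere (0 : Fin 2 → ℝ) 1 → Proj (Fin 2 → ℝ) := fun x =>
    Quot.mk _ ⟨x.val, by
      have hx := x.prop
      rw [mem_sphere_zero_iff_norm] at hx
      intro h0
      rw [h0] at hx
      simp at hx⟩ with hg
  have hcont : Continuous g := mk_continuous.comp (continuous_subtype_val.subtype_mk _)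
  have hsurj : Function.Surjective g := by
    intro p
    induction p using Quot.ind with | _ v =>
    have hvn : ‖v.val‖ ≠ 0 := norm_ne_zero_iff.2 v.prop
    refine ⟨⟨‖v.val‖⁻¹ • v.val, ?_⟩, ?_⟩
    · rw [mem_sphere_zero_iff_norm, norm_smul, norm_inv, norm_norm,
        inv_mul_cancel₀ hvn]
    · refine Quot.sound ⟨‖v.val‖, hvn, ?_⟩
      simp [smul_inv_smul₀ hvn]
  exact ⟨hsurj.range_eq ▸ isCompact_range hcont⟩

theorem vecMulVec_ne_zero {u v : Fin 2 → ℝ} (hu : u ≠ 0) (hv : v ≠ 0) :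
    Matrix.vecMulVec u v ≠ 0 := by
  obtain ⟨i, hi⟩ := Function.ne_iff.1 hu
  obtain ⟨j, hj⟩ := Function.ne_iff.1 hv
  intro h
  have h2 : Matrix.vecMulVec u v i j = 0 := by rw [h]; rfl
  rw [Matrix.vecMulVec_apply] at h2
  exact mul_ne_zero (by simpa using hi) (by simpa using hj) h2

theorem det_vecMulVec' (u v : Fin 2 → ℝ) : (Matrix.vecMulVec u v).det = 0 := by
  rw [Matrix.det_fin_two]
  simp only [Matrix.vecMulVec_apply]
  ring

theorem rank_one_fact {A : Matrix (Fin 2) (Fin 2) ℝ} (hA : A ≠ 0) (hdet : A.det = 0) :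
    ∃ u v : Fin 2 → ℝ, u ≠ 0 ∧ v ≠ 0 ∧ Matrix.vecMulVec u v = A := by
  rw [Matrix.det_fin_two] at hdet
  have hone : ∀ x : ℝ, ![1, x] ≠ 0 := fun x h => by simpa using congrFun h 0
  by_cases h00 : A 0 0 ≠ 0
  · refine ⟨![1, A 1 0 / A 0 0], ![A 0 0, A 0 1], hone _,
      fun h => h00 (by simpa using congrFun h 0), ?_⟩
    ext i j
    fin_cases i <;> fin_cases j <;>
      simp [Matrix.vecMulVec_apply] <;> field_simp <;> linarith
  · push_neg at h00
    by_cases h01 : A 0 1 ≠ 0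
    · refine ⟨![1, A 1 1 / A 0 1], ![A 0 0, A 0 1], hone _,
        fun h => h01 (by simpa using congrFun h 1), ?_⟩
      ext i j
      fin_cases i <;> fin_cases j <;>
        simp [Matrix.vecMulVec_apply] <;> field_simp <;> linarith
    · push_neg at h01
      have hrow : ![A 1 0, A 1 1] ≠ 0 := by
        intro h
        apply hA
        have h10 : A 1 0 = 0 := by simpa using congrFun h 0
        have h11 : A 1 1 = 0 := by simpa using congrFun h 1
        ext i j
        fin_cases i <;> fin_cases j <;> simp [h00, h01, h10, h11]
      refine ⟨![0, 1], ![A 1 0, A 1 1], fun h => by simpa using congrFun h 1, hrow, ?_⟩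
      ext i j
      fin_cases i <;> fin_cases j <;> simp [Matrix.vecMulVec_apply, h00, h01]

end Concrete

end AdSProof


open AdSProof Matrix in
/-- the map `ℝP¹ × ℝP¹ → P(M₂(ℝ))`, `([u],[v]) ↦ [u vᵀ]`, is well defined and is
a homeomorphism onto `{[A] : det A = 0}`; in particular the boundary at infinity of `AdS₃`
(the projectivized null cone of `-det`) is homeomorphic to `ℝP¹ × ℝP¹`. -/
theorem boundary_AdS3_homeomorph_RP1_prod_RP1 :
    ∃ f : Proj (Fin 2 → ℝ) × Proj (Fin 2 → ℝ) ≃ₜ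
        {p : Proj (Matrix (Fin 2) (Fin 2) ℝ) |
          ∃ A : {A : Matrix (Fin 2) (Fin 2) ℝ // A ≠ 0}, A.val.det = 0 ∧ p = Quot.mk _ A},
      ∀ (u v : Fin 2 → ℝ) (hu : u ≠ 0) (hv : v ≠ 0) (hw : Matrix.vecMulVec u v ≠ 0),
        (f (Quot.mk _ ⟨u, hu⟩, Quot.mk _ ⟨v, hv⟩) : Proj (Matrix (Fin 2) (Fin 2) ℝ)) =
          Quot.mk _ ⟨Matrix.vecMulVec u v, hw⟩ := by
  haveI := t2_projV0
  haveI := t2_projM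
  haveI := compact_projV0
  let F0 : {v : Fin 2 → ℝ // v ≠ 0} → {v : Fin 2 → ℝ // v ≠ 0} →
      {p : Proj (Matrix (Fin 2) (Fin 2) ℝ) |
        ∃ A : {A : Matrix (Fin 2) (Fin 2) ℝ // A ≠ 0}, A.val.det = 0 ∧ p = Quot.mk _ A} :=
    fun u v => ⟨Quot.mk _ ⟨vecMulVec u.val v.val, AdSProof.vecMulVec_ne_zero u.prop v.prop⟩,
      ⟨_, det_vecMulVec' _ _, rfl⟩⟩
  have hF0l : ∀ u u' v, rel (Fin 2 → ℝ) u u' → F0 u v = F0 u' v := by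
    rintro u u' v ⟨c, hc, hcv⟩
    apply Subtype.ext
    refine Quot.sound ⟨c, hc, ?_⟩
    show c • vecMulVec u.val v.val = vecMulVec u'.val v.val
    ext i j
    simp only [Matrix.smul_apply, Matrix.vecMulVec_apply, smul_eq_mul]
    rw [← hcv]
    simp only [Pi.smul_apply, smul_eq_mul]
    ring
  have hF0r : ∀ u v v', rel (Fin 2 → ℝ) v v' → F0 u v = F0 u v' := by
    rintro u v v' ⟨c, hc, hcv⟩
    apply Subtype.ext
    refine Quot.sound ⟨c, hc, ?_⟩
    show c • vecMulVec u.val v.val = vecMulVec u.val v'.val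
    ext i j
    simp only [Matrix.smul_apply, Matrix.vecMulVec_apply, smul_eq_mul]
    rw [← hcv]
    simp only [Pi.smul_apply, smul_eq_mul]
    ring
  let f : Proj (Fin 2 → ℝ) × Proj (Fin 2 → ℝ) →
      {p : Proj (Matrix (Fin 2) (Fin 2) ℝ) |
        ∃ A : {A : Matrix (Fin 2) (Fin 2) ℝ // A ≠ 0}, A.val.det = 0 ∧ p = Quot.mk _ A} :=
    fun p =>
      Quot.lift (fun u => Quot.lift (F0 u) (fun v v' h => hF0r u v v' h))
        (fun u u' h => funext fun q => by
          induction q using Quot.ind with | _ v => exact hF0l u u' v h) p.1 p.2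
  have hq : IsOpenQuotientMap
      (Prod.map (Quot.mk (rel (Fin 2 → ℝ))) (Quot.mk (rel (Fin 2 → ℝ)))) :=
    mk_openQuotientMap.prodMap mk_openQuotientMap
  have hcont : Continuous f := by
    erw [← hq.continuous_comp_iff]
    show Continuous fun p : {v : Fin 2 → ℝ // v ≠ 0} × {v : Fin 2 → ℝ // v ≠ 0} => F0 p.1 p.2
    apply Continuous.subtype_mk
    apply mk_continuous.comp
    apply Continuous.subtype_mk
    show Continuous fun p : {v : Fin 2 → ℝ // v ≠ 0} × {v : Fin 2 → ℝ // v ≠ 0} =>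
      vecMulVec p.1.val p.2.val
    apply continuous_matrix
    intro i j
    show Continuous fun p : {v : Fin 2 → ℝ // v ≠ 0} × {v : Fin 2 → ℝ // v ≠ 0} =>
      p.1.val i * p.2.val j
    exact ((continuous_apply i).comp (continuous_subtype_val.comp continuous_fst)).mul
      ((continuous_apply j).comp (continuous_subtype_val.comp continuous_snd))
  have hinj : Function.Injective f := by
    rintro ⟨x, y⟩ ⟨x', y'⟩ h
    induction x using Quot.ind with | _ u => ?_
    induction y using Quot.ind with | _ v => ?_
    induction x' using Quot.ind with | _ u' => ?_
    induction y' using Quot.ind with | _ v' => ?_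
    have h' := congrArg Subtype.val h
    erw [show (f (Quot.mk _ u, Quot.mk _ v)).val =
        Quot.mk _ ⟨vecMulVec u.val v.val, AdSProof.vecMulVec_ne_zero u.prop v.prop⟩ from rfl,
      show (f (Quot.mk _ u', Quot.mk _ v')).val =
        Quot.mk _ ⟨vecMulVec u'.val v'.val, AdSProof.vecMulVec_ne_zero u'.prop v'.prop⟩ from rfl,
      quot_mk_eq_iff] at h'
    obtain ⟨c, hc, hcv⟩ := h'
    have hent : ∀ i j, c * (u.val i * v.val j) = u'.val i * v'.val j := by
      intro i j
      have h2 := congrFun (congrFun hcv i) j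
      simpa [Matrix.smul_apply, Matrix.vecMulVec_apply] using h2
    obtain ⟨j0, hj0⟩ := Function.ne_iff.1 v'.prop
    simp only [Pi.zero_apply] at hj0
    obtain ⟨i0, hi0⟩ := Function.ne_iff.1 u.prop
    simp only [Pi.zero_apply] at hi0
    have hau : (c * v.val j0 / v'.val j0) • u.val = u'.val := by
      funext i
      simp only [Pi.smul_apply, smul_eq_mul]
      field_simp
      linear_combination hent i j0
    have hane : (c * v.val j0 / v'.val j0) ≠ 0 := by
      intro h0
      exact u'.prop (by rw [← hau, h0, zero_smul])
    have hu'i0 : u'.val i0 ≠ 0 := by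
      rw [← hau]
      simpa using mul_ne_zero hane hi0
    have hbv : (c * u.val i0 / u'.val i0) • v.val = v'.val := by
      funext j
      simp only [Pi.smul_apply, smul_eq_mul]
      field_simp
      linear_combination hent i0 j
    have hbne : (c * u.val i0 / u'.val i0) ≠ 0 := by
      intro h0
      exact v'.prop (by rw [← hbv, h0, zero_smul])
    exact Prod.ext ((quot_mk_eq_iff u u').2 ⟨_, hane, hau⟩)
      ((quot_mk_eq_iff v v').2 ⟨_, hbne, hbv⟩)
  have hsurj : Function.Surjective f := by
    rintro ⟨p, A, hdet, rfl⟩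
    obtain ⟨u, v, hu, hv, huv⟩ := rank_one_fact A.prop hdet
    exact ⟨(Quot.mk _ ⟨u, hu⟩, Quot.mk _ ⟨v, hv⟩),
      Subtype.ext (congrArg (Quot.mk _) (Subtype.ext huv))⟩
  refine ⟨hcont.homeoOfEquivCompactToT2 (f := Equiv.ofBijective f ⟨hinj, hsurj⟩), ?_⟩
  intro u v hu hv hw
  rfl
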